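/- arXiv:1608.03779 — 2 statements merged into one kernel-verified Lean document; each statement's English description precedes it below -/
import Mathlib

section
/- For any n ∈ ℤ and real x with |x| ≤ 1, cos(2n·arcsin(x)) = F(n, -n; 1/2; x²), where F is the Gauss hypergeometric function (a terminating polynomial since n, -n are integer parameters of opposite signs). -/
open Polynomial Finset

/-- The Pochhammer symbol `(a)_k = a (a+1) ⋯ (a+k-1)`. -/
def poch (a : ℝ) (k : ℕ) : ℝ := ∏ i ∈ Finset.range k, (a + i)


noncomputable def Up (k : ℕ) : Polynomial ℝ := ∏ i ∈ Finset.range k, (C (i:ℝ) - X)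
noncomputable def Vp (k : ℕ) : Polynomial ℝ := ∏ i ∈ Finset.range k, (C (i:ℝ) + X)
noncomputable def Dp (k : ℕ) : Polynomial ℝ := Up k * Vp k

lemma Up_succ (k : ℕ) : Up (k+1) = Up k * (C (k:ℝ) - X) := Finset.prod_range_succ _ _
lemma Vp_succ (k : ℕ) : Vp (k+1) = Vp k * (C (k:ℝ) + X) := Finset.prod_range_succ _ _

lemma Ccast (k : ℕ) : (C ((k:ℝ)+1) : Polynomial ℝ) = C (k:ℝ) + 1 := by rw [C_add, C_1]

lemma L1 (k : ℕ) : (Up k).comp (X + 1) * (C (k:ℝ) - 1 - X) = (- 1 - X) * Up k := by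
  induction k with
  | zero => simp [Up]
  | succ k ih =>
    rw [Up_succ, mul_comp, sub_comp, C_comp, X_comp]
    push_cast [Ccast]
    linear_combination (C (k:ℝ) - X) * ih

lemma L2 (k : ℕ) : (Vp k).comp (X + 1) * X = (C (k:ℝ) + X) * Vp k := by
  induction k with
  | zero => simp [Vp]
  | succ k ih =>
    rw [Vp_succ, mul_comp, add_comp, C_comp, X_comp]
    push_cast [Ccast]
    linear_combination (C (k:ℝ) + X + 1) * ih

lemma L3 (k : ℕ) : (Up k).comp (X - 1) * (- X) = (C (k:ℝ) - X) * Up k := by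
  induction k with
  | zero => simp [Up]
  | succ k ih =>
    rw [Up_succ, mul_comp, sub_comp, C_comp, X_comp]
    push_cast [Ccast]
    linear_combination (C (k:ℝ) - X + 1) * ih

lemma L4 (k : ℕ) : (Vp k).comp (X - 1) * (C (k:ℝ) - 1 + X) = (X - 1) * Vp k := by
  induction k with
  | zero => simp [Vp]; ring
  | succ k ih =>
    rw [Vp_succ, mul_comp, add_comp, C_comp, X_comp]
    push_cast [Ccast]
    linear_combination (C (k:ℝ) + X) * ih

lemma CX_ne (a : ℝ) : (C a : Polynomial ℝ) - X ≠ 0 := fun h => by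
  simpa using congrArg (fun p => Polynomial.coeff p 1) h

lemma CX_ne' (a : ℝ) : (C a : Polynomial ℝ) + X ≠ 0 := fun h => by
  simpa using congrArg (fun p => Polynomial.coeff p 1) h

lemma main_poly (k : ℕ) :
    (Dp (k+1)).comp (X + 1) + (Dp (k+1)).comp (X - 1)
      = 2 * Dp (k+1) - C (2*((k:ℝ)+1)*(2*(k:ℝ)+1)) * Dp k := by
  have hM : (X : Polynomial ℝ) * ((C (k:ℝ) - X) * (C (k:ℝ) + X)) ≠ 0 :=
    mul_ne_zero X_ne_zero (mul_ne_zero (CX_ne _) (CX_ne' _))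
  apply mul_right_cancel₀ hM
  have hC2 : (C (2*((k:ℝ)+1)*(2*(k:ℝ)+1)) : Polynomial ℝ)
      = 2 * (C (k:ℝ) + 1) * (2 * C (k:ℝ) + 1) := by
    simp only [C_mul, C_add, C_1]
    have : (C (2:ℝ) : Polynomial ℝ) = 2 := by
      rw [show (2:ℝ) = 1+1 by norm_num, C_add, C_1]; ring
    rw [this]
  have e1 : (Dp (k+1)).comp (X + 1) * ((C (k:ℝ) - X) * X)
      = (- 1 - X) * (C (k:ℝ) + 1 + X) * Dp (k+1) := by
    rw [Dp, mul_comp]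
    have u := L1 (k+1); have v := L2 (k+1)
    push_cast [Ccast] at u v
    linear_combination ((Vp (k+1)).comp (X + 1) * X) * u + ((- 1 - X) * Up (k+1)) * v
  have e2 : (Dp (k+1)).comp (X - 1) * ((- X) * (C (k:ℝ) + X))
      = (C (k:ℝ) + 1 - X) * (X - 1) * Dp (k+1) := by
    rw [Dp, mul_comp]
    have u := L3 (k+1); have v := L4 (k+1)
    push_cast [Ccast] at u v
    linear_combination ((Vp (k+1)).comp (X - 1) * (C (k:ℝ) + X)) * u
      + ((C (k:ℝ) + 1 - X) * Up (k+1)) * v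
  have e3 : Dp (k+1) = Dp k * ((C (k:ℝ) - X) * (C (k:ℝ) + X)) := by
    rw [Dp, Dp, Up_succ, Vp_succ]; ring
  rw [hC2]
  linear_combination (C (k:ℝ) + X) * e1 - (C (k:ℝ) - X) * e2
    - (2*(C (k:ℝ) + 1)*(2*C (k:ℝ) + 1)*X) * e3

def dd (m : ℝ) (k : ℕ) : ℝ := ∏ i ∈ Finset.range k, ((i:ℝ)^2 - m^2)

lemma Dp_eval (m : ℝ) (k : ℕ) : (Dp k).eval m = dd m k := by
  rw [Dp, dd, eval_mul, Up, Vp, eval_prod, eval_prod, ← Finset.prod_mul_distrib]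
  exact Finset.prod_congr rfl fun i _ => by simp; ring

lemma dd_rec (k : ℕ) (m : ℝ) :
    dd (m+1) (k+1) + dd (m-1) (k+1)
      = 2 * dd m (k+1) - (2*((k:ℝ)+1)*(2*(k:ℝ)+1)) * dd m k := by
  have h := congrArg (eval m) (main_poly k)
  simpa [eval_comp, Dp_eval] using h

lemma dd_neg (m : ℝ) (k : ℕ) : dd (-m) k = dd m k := by simp [dd]

lemma dd_nat_zero {M k : ℕ} (h : M < k) : dd (M:ℝ) k = 0 :=
  Finset.prod_eq_zero (Finset.mem_range.2 h) (by simp)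

lemma poch_half_pos (k : ℕ) : 0 < poch (1/2) k :=
  Finset.prod_pos fun i _ => by positivity

noncomputable def cc (m : ℝ) (k : ℕ) : ℝ := dd m k / (poch (1/2) k * (Nat.factorial k))

lemma cc_zero (m : ℝ) : cc m 0 = 1 := by simp [cc, dd, poch]

lemma cc_nat_zero {M k : ℕ} (h : M < k) : cc (M:ℝ) k = 0 := by
  simp [cc, dd_nat_zero h]

lemma poch_succ (a : ℝ) (k : ℕ) : poch a (k+1) = poch a k * (a + k) :=
  Finset.prod_range_succ _ _

lemma cc_rec (k : ℕ) (m : ℝ) :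
    cc (m+1) (k+1) = 2 * cc m (k+1) - cc (m-1) (k+1) - 4 * cc m k := by
  have h := dd_rec k m
  have hp : poch (1/2) (k+1) = poch (1/2) k * ((1:ℝ)/2 + k) := poch_succ _ _
  have hppos := poch_half_pos k
  have hppos' := poch_half_pos (k+1)
  have hf : (Nat.factorial (k+1) : ℝ) = (Nat.factorial k : ℝ) * (k+1) := by
    rw [Nat.factorial_succ]; push_cast; ring
  have hfpos : (0:ℝ) < Nat.factorial k := by positivity
  rw [cc, cc, cc, cc, hp, hf]
  field_simp
  linear_combination 2 * h

lemma sum_ext {M N : ℕ} (h : M+1 ≤ N) (y : ℝ) :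
    ∑ k ∈ range (M+1), cc (M:ℝ) k * y^k = ∑ k ∈ range N, cc (M:ℝ) k * y^k :=
  Finset.sum_subset (Finset.range_subset_range.2 h) (fun k _ hk => by
    rw [cc_nat_zero (by simpa using hk : M < k), zero_mul])

lemma Sstep (M N' : ℕ) (hN : M+2 ≤ N') (y : ℝ) :
    ∑ k ∈ range (N'+1), cc ((M:ℝ)+2) k * y^k
      = 2*(1-2*y) * (∑ k ∈ range (N'+1), cc ((M:ℝ)+1) k * y^k)
        - ∑ k ∈ range (N'+1), cc (M:ℝ) k * y^k := by
  have key : ∀ k:ℕ, cc ((M:ℝ)+2) (k+1)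
      = 2*cc ((M:ℝ)+1) (k+1) - cc (M:ℝ) (k+1) - 4*cc ((M:ℝ)+1) k := by
    intro k
    have h := cc_rec k ((M:ℝ)+1)
    have e1 : (M:ℝ)+1+1 = (M:ℝ)+2 := by ring
    have e2 : (M:ℝ)+1-1 = (M:ℝ) := by ring
    rwa [e1, e2] at h
  have hlast : cc ((M:ℝ)+1) N' = 0 := by
    have e : ((M:ℝ)+1) = ((M+1:ℕ):ℝ) := by push_cast; ring
    rw [e]; exact cc_nat_zero (by omega)
  have h1 := Finset.sum_range_succ' (fun k => cc ((M:ℝ)+2) k * y^k) N'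
  have h2 := Finset.sum_range_succ' (fun k => cc ((M:ℝ)+1) k * y^k) N'
  have h3 := Finset.sum_range_succ' (fun k => cc ((M:ℝ)) k * y^k) N'
  have h4 := Finset.sum_range_succ (fun k => cc ((M:ℝ)+1) k * y^k) N'
  simp only [cc_zero, pow_zero, mul_one, hlast, zero_mul, add_zero] at h1 h2 h3 h4
  have h5 : ∑ k ∈ range N', cc ((M:ℝ)+2) (k+1) * y^(k+1)
      = 2*(∑ k ∈ range N', cc ((M:ℝ)+1) (k+1) * y^(k+1))
        - (∑ k ∈ range N', cc (M:ℝ) (k+1) * y^(k+1))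
        - 4*y*(∑ k ∈ range N', cc ((M:ℝ)+1) k * y^k) := by
    rw [Finset.mul_sum, Finset.mul_sum, ← Finset.sum_sub_distrib, ← Finset.sum_sub_distrib]
    exact Finset.sum_congr rfl fun k _ => by rw [key k]; ring
  linear_combination h1 + h5 - 2*h2 + h3 + 4*y*h4

lemma cos_eq (M : ℕ) (θ : ℝ) :
    Real.cos (2*(M:ℝ)*θ) = ∑ k ∈ range (M+1), cc (M:ℝ) k * (Real.sin θ ^ 2)^k := by
  induction M using Nat.twoStepInduction with
  | zero => simp [cc_zero]
  | one =>
    push_cast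
    rw [Finset.sum_range_succ, Finset.sum_range_succ, Finset.sum_range_zero]
    have hc1 : cc (1:ℝ) 1 = -2 := by
      norm_num [cc, dd, poch, Nat.factorial]
    rw [hc1, cc_zero, show (2:ℝ)*1*θ = 2*θ by ring, Real.cos_two_mul, Real.cos_sq']
    ring
  | more M ih1 ih2 =>
    have trig : Real.cos (2*((M:ℝ)+2)*θ)
        = 2*Real.cos (2*θ)*Real.cos (2*((M:ℝ)+1)*θ) - Real.cos (2*(M:ℝ)*θ) := by
      rw [show 2*((M:ℝ)+2)*θ = (2*((M:ℝ)+1)*θ) + 2*θ by ring, Real.cos_add,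
          show 2*(M:ℝ)*θ = (2*((M:ℝ)+1)*θ) - (2*θ) by ring, Real.cos_sub]
      ring
    have hcos2 : Real.cos (2*θ) = 1 - 2*(Real.sin θ ^ 2) := by
      rw [Real.cos_two_mul, Real.cos_sq']; ring
    have e1 : ∑ k ∈ range (M+1+1), cc ((M:ℝ)+1) k * (Real.sin θ ^ 2)^k
        = ∑ k ∈ range (M+2+1), cc ((M:ℝ)+1) k * (Real.sin θ ^ 2)^k := by
      have e : ((M:ℝ)+1) = ((M+1:ℕ):ℝ) := by push_cast; ring
      rw [e]; exact sum_ext (by omega) _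
    have e0 : ∑ k ∈ range (M+1), cc ((M:ℝ)) k * (Real.sin θ ^ 2)^k
        = ∑ k ∈ range (M+2+1), cc ((M:ℝ)) k * (Real.sin θ ^ 2)^k :=
      sum_ext (by omega) _
    push_cast
    push_cast at ih1 ih2
    rw [trig, hcos2, ih2, ih1, e1, e0]
    exact (Sstep M (M+2) (by omega) _).symm

lemma poch_mul_poch (m : ℝ) (k : ℕ) : poch m k * poch (-m) k = dd m k := by
  rw [poch, poch, dd, ← Finset.prod_mul_distrib]
  exact Finset.prod_congr rfl fun i _ => by ring

/-- For any `n ∈ ℤ` and real `x` with `|x| ≤ 1`, `cos(2n arcsin x) = F(n, -n; 1/2; x²)`,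
the Gauss hypergeometric series terminating as a polynomial of degree `|n|` in `x²`. -/
theorem cos_arcsin_hypergeometric (n : ℤ) (x : ℝ) (hx : |x| ≤ 1) :
    Real.cos (2 * n * Real.arcsin x) =
      ∑ k ∈ Finset.range (n.natAbs + 1),
        poch n k * poch (-n) k / (poch (1/2) k * k.factorial) * x ^ (2 * k) := by
  obtain ⟨hx1, hx2⟩ := abs_le.1 hx
  have hs : Real.sin (Real.arcsin x) = x := Real.sin_arcsin hx1 hx2
  have hsq : ((n.natAbs : ℝ))^2 = ((n:ℝ))^2 := by
    rw [Nat.cast_natAbs, Int.cast_abs, sq_abs]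
  have hcosarg : Real.cos (2 * (n:ℝ) * Real.arcsin x)
      = Real.cos (2 * (n.natAbs : ℝ) * Real.arcsin x) := by
    have habs : ((n.natAbs:ℝ)) = |(n:ℝ)| := by rw [Nat.cast_natAbs, Int.cast_abs]
    rw [habs]
    rcases abs_cases ((n:ℝ)) with ⟨h,_⟩|⟨h,_⟩ <;> rw [h]
    rw [show 2 * -(n:ℝ) * Real.arcsin x = -(2 * (n:ℝ) * Real.arcsin x) by ring, Real.cos_neg]
  rw [hcosarg, cos_eq n.natAbs (Real.arcsin x)]
  refine Finset.sum_congr rfl fun k _ => ?_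
  rw [hs, poch_mul_poch]
  have hdd : dd (n:ℝ) k = dd (n.natAbs:ℝ) k := by
    rw [dd, dd]
    exact Finset.prod_congr rfl fun i _ => by rw [hsq]
  rw [hdd, cc, pow_mul]
end

section
/- Let p, q ≥ 0 with p + q = d ≥ 1, and let E(w) = (i^q/(2^d π^{d/2})) Σ_{k≥0} (-w/4)^k/(k! Γ(k+d/2)). For every z ∈ ℂ, the function u(x) = E(z(x'² - x''²)) on ℝ^d, where x = (x', x'') ∈ ℝ^p × ℝ^q, x'² = x₁²+⋯+x_p², x''² = x_{p+1}²+⋯+x_d², satisfies the eigenequation (-□ - z)u = 0, where □ = ∂₁² + ⋯ + ∂_p² - ∂_{p+1}² - ⋯ - ∂_d² is the ultra-hyperbolic operator. -/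
open ContinuousLinearMap

open FormalMultilinearSeries Filter

/-- Ratio bound gives infinite radius. -/
lemma radius_top_of_ratio (s : ℕ → ℂ) (h0 : ∀ k, s k ≠ 0)
    (hb : ∀ k : ℕ, ((k:ℝ)+1) * ‖s (k+1)‖ ≤ ‖s k‖) :
    (ofScalars ℂ s).radius = ⊤ := by
  refine ofScalars_radius_eq_top_of_tendsto ℂ s (Eventually.of_forall fun n => h0 n) ?_
  have hbound : ∀ n : ℕ, ‖s (n+1)‖ / ‖s n‖ ≤ 1 / ((n:ℝ)+1) := by
    intro n
    rw [div_le_div_iff₀ (norm_pos_iff.2 (h0 n)) (by positivity)]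
    nlinarith [hb n]
  exact squeeze_zero (fun n => by positivity) hbound
    tendsto_one_div_add_atTop_nhds_zero_nat

lemma derivSeries_apply_one (s : ℕ → ℂ) (n : ℕ) (w : ℂ) :
    ((ofScalars ℂ s).derivSeries n (fun _ => w)) 1 = ((n:ℂ)+1) * s (n+1) * w ^ n := by
  rcases eq_or_ne w 0 with hw | hw
  · subst hw
    cases n with
    | zero =>
      have h1 : (fun _ : Fin 0 => (0:ℂ)) = (fun _ : Fin 0 => (1:ℂ)) := funext fun i => i.elim0
      rw [h1]
      have := derivSeries_apply_diag (ofScalars ℂ s) 0 (1:ℂ)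
      rw [this, ofScalars_apply_eq]
      simp
    | succ k =>
      have : (ofScalars ℂ s).derivSeries (k+1) (fun _ => (0:ℂ)) = 0 := by
        have := ((ofScalars ℂ s).derivSeries (k+1)).map_coord_zero
          (m := fun _ => (0:ℂ)) (0 : Fin (k+1)) rfl
        exact this
      rw [this]; simp
  · have hD : ((ofScalars ℂ s).derivSeries n (fun _ => w)) w
        = w • ((ofScalars ℂ s).derivSeries n (fun _ => w)) 1 := by
      simpa using ((ofScalars ℂ s).derivSeries n (fun _ => w)).map_smul w 1
    have hdiag := derivSeries_apply_diag (ofScalars ℂ s) n w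
    rw [ofScalars_apply_eq] at hdiag
    rw [hdiag] at hD
    have h2 : ((n:ℂ)+1) * (s (n+1) * w ^ (n+1)) = w * ((ofScalars ℂ s).derivSeries n (fun _ => w)) 1 := by
      simp only [smul_eq_mul, nsmul_eq_mul] at hD
      rw [← hD]; push_cast; ring
    apply mul_left_cancel₀ hw
    rw [← h2, pow_succ]; ring

lemma psum_eq (s : ℕ → ℂ) (w : ℂ) : (ofScalars ℂ s).sum w = ∑' k, s k * w ^ k := by
  rw [← ofScalarsSum, ofScalars_sum_eq]; simp [smul_eq_mul]

lemma hasSum_of_radius (s : ℕ → ℂ) (h : (ofScalars ℂ s).radius = ⊤) (w : ℂ) :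
    HasSum (fun k => s k * w ^ k) (∑' k, s k * w ^ k) := by
  have hb : HasFPowerSeriesOnBall (ofScalars ℂ s).sum (ofScalars ℂ s) 0 ⊤ := by
    have := (ofScalars ℂ s).hasFPowerSeriesOnBall (by rw [h]; exact ENNReal.zero_lt_top)
    rwa [h] at this
  have := hb.hasSum (y := w) (by simp [EMetric.mem_ball, edist_lt_top])
  simp only [zero_add, ofScalars_apply_eq, smul_eq_mul] at this
  rwa [psum_eq] at this

lemma hasDerivAt_of_radius (s : ℕ → ℂ) (h : (ofScalars ℂ s).radius = ⊤) (w : ℂ) :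
    HasDerivAt (fun w => ∑' k, s k * w ^ k)
      (∑' k : ℕ, ((k:ℂ)+1) * s (k+1) * w ^ k) w := by
  have hb : HasFPowerSeriesOnBall (ofScalars ℂ s).sum (ofScalars ℂ s) 0 ⊤ := by
    have := (ofScalars ℂ s).hasFPowerSeriesOnBall (by rw [h]; exact ENNReal.zero_lt_top)
    rwa [h] at this
  have hfd := hb.fderiv
  have hmem : w ∈ Metric.eball (0:ℂ) ⊤ := by simp [EMetric.mem_ball, edist_lt_top]
  have hs := hfd.hasSum (y := w) hmem
  rw [zero_add] at hs
  have hs1 := (ContinuousLinearMap.apply ℂ ℂ (1:ℂ)).hasSum hs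
  simp only [ContinuousLinearMap.apply_apply] at hs1
  have heq : (fun n => ((ofScalars ℂ s).derivSeries n (fun _ => w)) 1)
      = fun n : ℕ => ((n:ℂ)+1) * s (n+1 : ℕ) * w ^ n := funext fun n => derivSeries_apply_one s n w
  rw [heq] at hs1
  have hdiff : DifferentiableAt ℂ (ofScalars ℂ s).sum w := by
    have := hb.differentiableOn w hmem
    exact this.differentiableAt (by simpa [Metric.emetric_ball_top] using Filter.univ_mem)
  have hda := hdiff.hasDerivAt
  have hderiv : deriv (ofScalars ℂ s).sum w = ∑' k : ℕ, ((k:ℂ)+1) * s (k+1) * w ^ k := by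
    rw [← fderiv_apply_one_eq_deriv]
    exact hs1.tsum_eq.symm ▸ hs1.tsum_eq
  have hfun : (fun w => ∑' k : ℕ, s k * w ^ k) = (ofScalars ℂ s).sum :=
    funext fun w => (psum_eq s w).symm
  rw [hfun, ← hderiv]
  exact hda

section Coeffs

variable (d : ℕ)

noncomputable def Ac (k : ℕ) : ℂ := (-1/4)^k / ((k.factorial : ℂ) * Complex.Gamma ((k:ℂ) + (d:ℂ)/2))

noncomputable def Bc (k : ℕ) : ℂ := ((k:ℂ)+1) * Ac d (k+1)

noncomputable def Cc (k : ℕ) : ℂ := ((k:ℂ)+1) * Bc d (k+1)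

lemma re_pos (hd : 1 ≤ d) (k : ℕ) : 0 < ((k:ℂ) + (d:ℂ)/2).re := by
  have : ((k:ℂ) + (d:ℂ)/2) = (((k:ℝ) + (d:ℝ)/2 : ℝ) : ℂ) := by push_cast; ring
  rw [this, Complex.ofReal_re]
  have : (1:ℝ) ≤ (d:ℝ) := by exact_mod_cast hd
  positivity

lemma Gamma_ne (hd : 1 ≤ d) (k : ℕ) : Complex.Gamma ((k:ℂ) + (d:ℂ)/2) ≠ 0 := by
  apply Complex.Gamma_ne_zero
  intro m hm
  have h1 := re_pos d hd k
  rw [hm] at h1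
  simp only [Complex.neg_re, Complex.natCast_re] at h1
  have : (0:ℝ) ≤ (m:ℝ) := Nat.cast_nonneg m
  linarith

lemma Ac_ne (hd : 1 ≤ d) (k : ℕ) : Ac d k ≠ 0 := by
  unfold Ac
  apply div_ne_zero
  · apply pow_ne_zero; norm_num
  · exact mul_ne_zero (Nat.cast_ne_zero.2 k.factorial_ne_zero) (Gamma_ne d hd k)

lemma Bc_ne (hd : 1 ≤ d) (k : ℕ) : Bc d k ≠ 0 :=
  mul_ne_zero (Nat.cast_add_one_ne_zero k) (Ac_ne d hd (k+1))

lemma Cc_ne (hd : 1 ≤ d) (k : ℕ) : Cc d k ≠ 0 :=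
  mul_ne_zero (Nat.cast_add_one_ne_zero k) (Bc_ne d hd (k+1))

lemma Arec (hd : 1 ≤ d) (k : ℕ) : Ac d (k+1) * (4*((k:ℂ)+1)*((k:ℂ) + (d:ℂ)/2)) = -Ac d k := by
  unfold Ac
  have hg : Complex.Gamma (((k+1:ℕ):ℂ) + (d:ℂ)/2) = ((k:ℂ) + (d:ℂ)/2) * Complex.Gamma ((k:ℂ) + (d:ℂ)/2) := by
    have : (((k+1:ℕ):ℂ) + (d:ℂ)/2) = ((k:ℂ) + (d:ℂ)/2) + 1 := by push_cast; ring
    rw [this, Complex.Gamma_add_one]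
    intro h0
    have := re_pos d hd k
    rw [h0] at this; simp at this
  have hfac : (((k+1).factorial : ℕ) : ℂ) = ((k:ℂ)+1) * (k.factorial : ℂ) := by
    rw [Nat.factorial_succ]; push_cast; ring
  have h1 : ((k.factorial : ℕ) : ℂ) ≠ 0 := Nat.cast_ne_zero.2 k.factorial_ne_zero
  have h2 : Complex.Gamma ((k:ℂ) + (d:ℂ)/2) ≠ 0 := Gamma_ne d hd k
  have h3 : ((k:ℂ)+1) ≠ 0 := Nat.cast_add_one_ne_zero k
  have h4 : ((k:ℂ) + (d:ℂ)/2) ≠ 0 := by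
    intro h0; have := re_pos d hd k; rw [h0] at this; simp at this
  rw [hg, hfac, pow_succ, div_mul_eq_mul_div, ← neg_div,
    div_eq_div_iff (mul_ne_zero (mul_ne_zero h3 h1) (mul_ne_zero h4 h2)) (mul_ne_zero h1 h2)]
  ring

lemma Brec (hd : 1 ≤ d) (k : ℕ) : Bc d (k+1) * (4*((k:ℂ)+1)*(((k:ℂ)+1) + (d:ℂ)/2)) = -Bc d k := by
  have h := Arec d hd (k+1)
  unfold Bc
  push_cast at h ⊢
  linear_combination ((k:ℂ)+1) * h

lemma Crec (hd : 1 ≤ d) (k : ℕ) : Cc d (k+1) * (4*((k:ℂ)+1)*(((k:ℂ)+2) + (d:ℂ)/2)) = -Cc d k := by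
  have h := Brec d hd (k+1)
  unfold Cc
  push_cast at h ⊢
  linear_combination ((k:ℂ)+1) * h

lemma ratio_norm (s : ℕ → ℂ) (t : ℕ → ℂ) (ht : ∀ k, (1:ℝ)/2 ≤ (t k).re)
    (hrec : ∀ k : ℕ, s (k+1) * (4*((k:ℂ)+1)*(t k)) = -s k) :
    ∀ k : ℕ, ((k:ℝ)+1) * ‖s (k+1)‖ ≤ ‖s k‖ := by
  intro k
  have h1 : ‖s k‖ = ‖s (k+1)‖ * (4*((k:ℝ)+1)*‖t k‖) := by
    rw [← norm_neg (s k), ← hrec k, norm_mul]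
    congr 1
    rw [norm_mul, norm_mul]
    congr 2
    · simp
    · have : ((k:ℂ)+1) = (((k:ℝ)+1 : ℝ) : ℂ) := by push_cast; ring
      rw [this, Complex.norm_real, Real.norm_eq_abs, abs_of_pos (by positivity)]
  have h2 : (1:ℝ)/2 ≤ ‖t k‖ := le_trans (ht k) (Complex.re_le_norm _)
  have h3 : (0:ℝ) ≤ ‖s (k+1)‖ := norm_nonneg _
  have hk : (0:ℝ) ≤ (k:ℝ) := Nat.cast_nonneg k
  nlinarith [mul_le_mul_of_nonneg_left h2 (mul_nonneg (mul_nonneg (by norm_num : (0:ℝ) ≤ 4) (by linarith : (0:ℝ) ≤ (k:ℝ)+1)) h3)]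

lemma re_half (hd : 1 ≤ d) (m : ℕ) : ∀ k : ℕ, (1:ℝ)/2 ≤ (((k:ℂ)+(m:ℂ)) + (d:ℂ)/2).re := by
  intro k
  have : (((k:ℂ)+(m:ℂ)) + (d:ℂ)/2) = (((k:ℝ) + (m:ℝ) + (d:ℝ)/2 : ℝ) : ℂ) := by push_cast; ring
  rw [this, Complex.ofReal_re]
  have h1 : (1:ℝ) ≤ (d:ℝ) := by exact_mod_cast hd
  have h2 : (0:ℝ) ≤ (k:ℝ) := Nat.cast_nonneg k
  have h3 : (0:ℝ) ≤ (m:ℝ) := Nat.cast_nonneg m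
  linarith

lemma Aradius (hd : 1 ≤ d) : (FormalMultilinearSeries.ofScalars ℂ (Ac d)).radius = ⊤ := by
  apply radius_top_of_ratio _ (Ac_ne d hd)
  apply ratio_norm _ (fun k => (k:ℂ) + (d:ℂ)/2)
  · intro k; have := re_half d hd 0 k; simpa using this
  · exact Arec d hd

lemma Bradius (hd : 1 ≤ d) : (FormalMultilinearSeries.ofScalars ℂ (Bc d)).radius = ⊤ := by
  apply radius_top_of_ratio _ (Bc_ne d hd)
  apply ratio_norm _ (fun k => ((k:ℂ)+1) + (d:ℂ)/2)
  · intro k; have := re_half d hd 1 k; simpa using this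
  · exact Brec d hd

lemma Cradius (hd : 1 ≤ d) : (FormalMultilinearSeries.ofScalars ℂ (Cc d)).radius = ⊤ := by
  apply radius_top_of_ratio _ (Cc_ne d hd)
  apply ratio_norm _ (fun k => ((k:ℂ)+2) + (d:ℂ)/2)
  · intro k; have := re_half d hd 2 k; simpa using this
  · exact Crec d hd

end Coeffs

noncomputable def Fn (d : ℕ) (w : ℂ) : ℂ := ∑' k : ℕ, Ac d k * w ^ k
noncomputable def Gn (d : ℕ) (w : ℂ) : ℂ := ∑' k : ℕ, Bc d k * w ^ k
noncomputable def Hn (d : ℕ) (w : ℂ) : ℂ := ∑' k : ℕ, Cc d k * w ^ k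

lemma F_hasDerivAt (d : ℕ) (hd : 1 ≤ d) (w : ℂ) : HasDerivAt (Fn d) (Gn d w) w := by
  have h := hasDerivAt_of_radius (Ac d) (Aradius d hd) w
  unfold Fn Gn Bc
  exact h

lemma G_hasDerivAt (d : ℕ) (hd : 1 ≤ d) (w : ℂ) : HasDerivAt (Gn d) (Hn d w) w := by
  have h := hasDerivAt_of_radius (Bc d) (Bradius d hd) w
  unfold Gn Hn Cc
  exact h

lemma ode (d : ℕ) (hd : 1 ≤ d) (w : ℂ) :
    4*w*Hn d w + 2*(d:ℂ)*Gn d w = -(Fn d w) := by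
  have hH := hasSum_of_radius (Cc d) (Cradius d hd) w
  have hG := hasSum_of_radius (Bc d) (Bradius d hd) w
  have hF := hasSum_of_radius (Ac d) (Aradius d hd) w
  rw [← Fn] at hF; rw [← Gn] at hG; rw [← Hn] at hH
  have h1 : HasSum (fun k : ℕ => (4*w) * (Cc d k * w ^ k)) (4*w*Hn d w) := hH.mul_left (4*w)
  set g : ℕ → ℂ := fun k => 4*(k:ℂ)*Bc d k*w^k with hg
  have h2 : HasSum (fun n : ℕ => g (n+1)) (4*w*Hn d w) := by
    have he : (fun n : ℕ => g (n+1)) = fun n : ℕ => (4*w) * (Cc d n * w ^ n) := by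
      funext n
      simp only [hg, Cc]
      push_cast
      ring
    rw [he]; exact h1
  have h3 : HasSum g (4*w*Hn d w) := by
    have := (hasSum_nat_add_iff (f := g) 1).mp h2
    simpa [hg] using this
  have h4 := h3.add (hG.mul_left (2*(d:ℂ)))
  have h5 : (fun k : ℕ => g k + (2*(d:ℂ)) * (Bc d k * w ^ k)) = fun k : ℕ => -(Ac d k * w ^ k) := by
    funext k
    have h := Arec d hd k
    simp only [hg, Bc]
    linear_combination (w^k) * h
  rw [h5] at h4
  exact h4.unique hF.neg

lemma Fn_eq (d : ℕ) (w : ℂ) : Fn d w = ∑' k : ℕ, Ac d k * w ^ k := rfl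


/-- For `p + q = d ≥ 1` and any `z ∈ ℂ`, the function `u(x) = E(z(x'² - x''²))` with
`E(w) = (i^q/(2^d π^{d/2})) Σ_k (-w/4)^k/(k! Γ(k+d/2))` satisfies the eigenequation
`(-□ - z)u = 0` for the ultra-hyperbolic operator
`□ = ∂₁² + ⋯ + ∂_p² - ∂_{p+1}² - ⋯ - ∂_d²`. -/
theorem ultrahyperbolic_eigenfunction (p q : ℕ) (hd : 1 ≤ p + q) (z : ℂ) :
    let d := p + q
    let E : ℂ → ℂ := fun w =>
      Complex.I ^ q / (2 ^ d * ((Real.pi ^ ((d : ℝ) / 2) : ℝ) : ℂ)) *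
        ∑' k : ℕ, (-w / 4) ^ k / ((k.factorial : ℂ) * Complex.Gamma ((k : ℂ) + (d : ℂ) / 2))
    let u : (Fin d → ℝ) → ℂ := fun x =>
      E (z * ∑ j : Fin d, (if (j : ℕ) < p then (1 : ℂ) else -1) * (((x j) ^ 2 : ℝ) : ℂ))
    ∀ x : Fin d → ℝ,
      -(∑ j : Fin d, (if (j : ℕ) < p then (1 : ℂ) else -1) *
          fderiv ℝ (fun y => fderiv ℝ u y (Pi.single j 1)) x (Pi.single j 1)) = z * u x := by
  intro d E u x
  have hd1 : 1 ≤ d := hd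
  set ε : Fin d → ℂ := fun j => if (j : ℕ) < p then (1:ℂ) else -1 with hε
  set C : ℂ := Complex.I ^ q / (2 ^ d * ((Real.pi ^ ((d : ℝ) / 2) : ℝ) : ℂ)) with hC
  set g : (Fin d → ℝ) → ℂ := fun y => z * ∑ j : Fin d, ε j * (((y j) ^ 2 : ℝ) : ℂ) with hgdef
  -- u equals C * Fn ∘ g
  have hufun : u = fun y => C * Fn d (g y) := by
    funext y
    show E (g y) = C * Fn d (g y)
    show C * _ = C * Fn d (g y)
    rw [Fn_eq]
    congr 1
    apply tsum_congr
    intro k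
    rw [Ac, show -(g y)/4 = -1/4 * g y by ring, mul_pow]
    ring
  -- derivative of g
  have hg : ∀ y : Fin d → ℝ, HasFDerivAt g
      (∑ j : Fin d, (z * ε j) • (Complex.ofRealCLM.comp
        ((y j) • (proj j : (Fin d → ℝ) →L[ℝ] ℝ) + (y j) • proj j))) y := by
    intro y
    have hfun : g = fun x : Fin d → ℝ => ∑ j : Fin d, (z * ε j) * (((x j * x j : ℝ)) : ℂ) := by
      funext x
      show z * ∑ j : Fin d, ε j * (((x j)^2 : ℝ) : ℂ) = _
      rw [Finset.mul_sum]
      apply Finset.sum_congr rfl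
      intro j _
      rw [sq]
      push_cast
      ring
    rw [hfun]
    apply HasFDerivAt.fun_sum
    intro j _
    have h : HasFDerivAt (fun x : Fin d → ℝ => x j) (proj j : (Fin d → ℝ) →L[ℝ] ℝ) y :=
      (proj j : (Fin d → ℝ) →L[ℝ] ℝ).hasFDerivAt
    exact (Complex.ofRealCLM.hasFDerivAt.comp y (h.fun_mul h)).const_mul (z * ε j)
  -- evaluation of Dg at single vectors
  have hDgval : ∀ (y : Fin d → ℝ) (j0 : Fin d),
      (∑ j : Fin d, (z * ε j) • (Complex.ofRealCLM.comp
        ((y j) • (proj j : (Fin d → ℝ) →L[ℝ] ℝ) + (y j) • proj j))) (Pi.single j0 1)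
      = z * ε j0 * (2 * y j0) := by
    intro y j0
    rw [ContinuousLinearMap.sum_apply]
    rw [Finset.sum_eq_single j0]
    · simp [Pi.single_apply]
      ring
    · intro j _ hj
      simp [Pi.single_apply, hj, Ne.symm hj]
    · simp
  -- first derivative of u
  have hu1 : ∀ y : Fin d → ℝ, HasFDerivAt (fun y' => C * Fn d (g y'))
      (C • ((((1 : ℂ →L[ℂ] ℂ).smulRight (Gn d (g y))).restrictScalars ℝ).comp
        (∑ j : Fin d, (z * ε j) • (Complex.ofRealCLM.comp
          ((y j) • (proj j : (Fin d → ℝ) →L[ℝ] ℝ) + (y j) • proj j))))) y := by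
    intro y
    exact (((F_hasDerivAt d hd1 (g y)).hasFDerivAt.restrictScalars ℝ).comp y (hg y)).const_mul C
  have hfd1 : ∀ (y : Fin d → ℝ) (j0 : Fin d),
      fderiv ℝ u y (Pi.single j0 1) = (C * (2 * z * ε j0)) * ((y j0 : ℂ) * Gn d (g y)) := by
    intro y j0
    have hrs : ∀ (t G : ℂ), (((1 : ℂ →L[ℂ] ℂ).smulRight G).restrictScalars ℝ) t = t * G := by
      intro t G; simp
    rw [hufun, (hu1 y).fderiv, ContinuousLinearMap.smul_apply, ContinuousLinearMap.comp_apply,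
      hDgval y j0, hrs, smul_eq_mul]
    ring
  -- second derivative
  have hsec : ∀ j0 : Fin d,
      fderiv ℝ (fun y => fderiv ℝ u y (Pi.single j0 1)) x (Pi.single j0 1)
      = (C * (2 * z * ε j0)) * (Gn d (g x) + (x j0 : ℂ) * (x j0 : ℂ) * (2 * z * ε j0) * Hn d (g x)) := by
    intro j0
    have hv : (fun y => fderiv ℝ u y (Pi.single j0 1))
        = fun y => (C * (2 * z * ε j0)) * ((y j0 : ℂ) * Gn d (g y)) := funext fun y => hfd1 y j0
    rw [hv]
    have hα : HasFDerivAt (fun y : Fin d → ℝ => ((y j0 : ℝ) : ℂ))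
        (Complex.ofRealCLM.comp (proj j0 : (Fin d → ℝ) →L[ℝ] ℝ)) x :=
      Complex.ofRealCLM.hasFDerivAt.comp x (proj j0 : (Fin d → ℝ) →L[ℝ] ℝ).hasFDerivAt
    have hβ : HasFDerivAt (fun y : Fin d → ℝ => Gn d (g y))
        ((((1 : ℂ →L[ℂ] ℂ).smulRight (Hn d (g x))).restrictScalars ℝ).comp
          (∑ j : Fin d, (z * ε j) • (Complex.ofRealCLM.comp
            ((x j) • (proj j : (Fin d → ℝ) →L[ℝ] ℝ) + (x j) • proj j)))) x :=
      ((G_hasDerivAt d hd1 (g x)).hasFDerivAt.restrictScalars ℝ).comp x (hg x)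
    have hprod := (hα.fun_mul hβ).const_mul (C * (2 * z * ε j0))
    rw [hprod.fderiv]
    have hrs : ∀ (t G : ℂ), (((1 : ℂ →L[ℂ] ℂ).smulRight G).restrictScalars ℝ) t = t * G := by
      intro t G; simp
    rw [ContinuousLinearMap.smul_apply, ContinuousLinearMap.add_apply,
      ContinuousLinearMap.smul_apply, ContinuousLinearMap.comp_apply, hDgval x j0, hrs,
      ContinuousLinearMap.smul_apply, ContinuousLinearMap.comp_apply]
    simp only [smul_eq_mul, ContinuousLinearMap.proj_apply, Pi.single_eq_same,
      Complex.ofRealCLM_apply, Complex.ofReal_one]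
    ring
  -- final algebra
  have hterm : ∀ j0 : Fin d, ε j0 * ((C * (2 * z * ε j0)) *
      (Gn d (g x) + (x j0 : ℂ) * (x j0 : ℂ) * (2 * z * ε j0) * Hn d (g x)))
      = 2 * C * z * Gn d (g x) + 4 * C * z * z * Hn d (g x) * (ε j0 * (((x j0)^2 : ℝ) : ℂ)) := by
    intro j0
    have hε2 : ε j0 * ε j0 = 1 := by
      by_cases hj : (j0 : ℕ) < p <;> simp [hε, hj]
    have hsq : (((x j0)^2 : ℝ) : ℂ) = (x j0 : ℂ) * (x j0 : ℂ) := by push_cast; ring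
    rw [hsq]
    linear_combination (C * 2 * z * Gn d (g x) + C * (x j0:ℂ) * (x j0:ℂ) * 4 * z * z * Hn d (g x) * ε j0) * hε2
  have hgoal : -(∑ j : Fin d, ε j *
      fderiv ℝ (fun y => fderiv ℝ u y (Pi.single j 1)) x (Pi.single j 1)) = z * u x := by
    have hsum : ∑ j : Fin d, ε j *
        fderiv ℝ (fun y => fderiv ℝ u y (Pi.single j 1)) x (Pi.single j 1)
        = ∑ j : Fin d, (2 * C * z * Gn d (g x) + 4 * C * z * z * Hn d (g x) * (ε j * (((x j)^2 : ℝ) : ℂ))) := by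
      apply Finset.sum_congr rfl
      intro j _
      rw [hsec j, hterm j]
    rw [hsum, Finset.sum_add_distrib, Finset.sum_const, ← Finset.mul_sum, Finset.card_univ,
      Fintype.card_fin]
    have hw : g x = z * ∑ j : Fin d, ε j * (((x j)^2 : ℝ) : ℂ) := rfl
    have hode := ode d hd1 (g x)
    have hux : u x = C * Fn d (g x) := by rw [hufun]
    rw [hux, nsmul_eq_mul]
    linear_combination (-C * z) * hode - (4 * C * z * Hn d (g x)) * hw
  exact hgoal
end
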